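/- Let n ≥ 2 and let ω be a weight function on the edges of K_n. If in every cycle of K_n the maximum of the weights of the edges of the cycle is attained by at least two edges of the cycle, then every edge of K_n is contained in some ω-minimum spanning tree of K_n. -/

import Mathlib

/-- Two of the three reals `a, b, c` are equal and not less than the third; equivalently,
the maximum of the three is attained at least twice. -/
def TwoMax (a b c : ℝ) : Prop :=
  (a = b ∧ c ≤ a) ∨ (a = c ∧ b ≤ a) ∨ (b = c ∧ a ≤ b)

/-- The triangle condition for a weight function `ω` on the edges of the complete graph
on `Fin n`: in every triangle, two of the three edge weights are equal and not less
than the third. -/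
def TriangleCondition (n : ℕ) (ω : Sym2 (Fin n) → ℝ) : Prop :=
  ∀ u v w : Fin n, u ≠ v → v ≠ w → u ≠ w →
    TwoMax (ω s(u, v)) (ω s(v, w)) (ω s(u, w))

/-- The cycle condition for a weight function `ω` on the edges of the complete graph on
`Fin n`: in every cycle, the maximum edge weight is attained by at least two edges of
the cycle. -/
def CycleCondition (n : ℕ) (ω : Sym2 (Fin n) → ℝ) : Prop :=
  ∀ (x : Fin n) (C : SimpleGraph.Walk (⊤ : SimpleGraph (Fin n)) x x), C.IsCycle →
    ∃ e ∈ C.edges, ∃ f ∈ C.edges, e ≠ f ∧ ω e = ω f ∧ ∀ g ∈ C.edges, ω g ≤ ω e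

/-- The ω-weight of a graph `T` on `Fin n`: the sum of `ω` over the edges of `T`. -/
noncomputable def graphWeight (n : ℕ) (ω : Sym2 (Fin n) → ℝ)
    (T : SimpleGraph (Fin n)) : ℝ :=
  ∑ᶠ e ∈ T.edgeSet, ω e

/-- `T` is an ω-minimum spanning tree of the complete graph on `Fin n`: it is a tree on
the vertex set `Fin n` and no such tree has strictly smaller ω-weight. -/
def IsMinSpanningTree (n : ℕ) (ω : Sym2 (Fin n) → ℝ) (T : SimpleGraph (Fin n)) : Prop :=
  T.IsTree ∧ ∀ T' : SimpleGraph (Fin n), T'.IsTree →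
    graphWeight n ω T ≤ graphWeight n ω T'

open SimpleGraph

private lemma walk_edges_mapLe {V : Type*} {G G' : SimpleGraph V} (h : G ≤ G') {u v : V}
    (p : G.Walk u v) : (p.mapLe h).edges = p.edges := by
  induction p with
  | nil => rfl
  | cons ha q ih =>
    rw [Walk.mapLe, Walk.map_cons, Walk.edges_cons, Walk.edges_cons]
    rw [Walk.mapLe] at ih
    rw [ih]
    rfl

/-- Deleting a non-bridge edge of a connected graph keeps it connected. -/
private lemma connected_sdiff_of_not_isBridge {V : Type*} {G : SimpleGraph V} {e : Sym2 V}
    (hc : G.Connected) (he : e ∈ G.edgeSet) (hb : ¬ G.IsBridge e) :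
    (G \ SimpleGraph.fromEdgeSet {e}).Connected := by
  induction e using Sym2.ind with
  | _ a b =>
    have hab : (G \ fromEdgeSet {s(a, b)}).Reachable a b := by
      by_contra h
      exact hb (isBridge_iff.2 h)
    have : Nonempty V := hc.nonempty
    refine ⟨fun x y => ?_⟩
    obtain ⟨w⟩ := hc.preconnected x y
    induction w with
    | nil => exact Reachable.refl _
    | @cons c d _ h q ih =>
      refine Reachable.trans ?_ ih
      by_cases hcd : s(c, d) = s(a, b)
      · rw [Sym2.eq_iff] at hcd
        rcases hcd with ⟨rfl, rfl⟩ | ⟨rfl, rfl⟩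
        · exact hab
        · exact hab.symm
      · refine Adj.reachable ?_
        rw [sdiff_adj]
        refine ⟨h, ?_⟩
        rw [fromEdgeSet_adj]
        rintro ⟨hmem, -⟩
        exact hcd (Set.mem_singleton_iff.1 hmem)

/-- Every connected graph on a finite vertex set contains a spanning tree. -/
private lemma exists_isTree_le {V : Type*} [Fintype V] :
    ∀ (k : ℕ) (G : SimpleGraph V), G.Connected → G.edgeSet.ncard ≤ k →
      ∃ T ≤ G, T.IsTree := by
  intro k
  induction k with
  | zero =>
    intro G hc hcard
    refine ⟨G, le_rfl, hc, fun v c hcyc => ?_⟩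
    have h3 := hcyc.three_le_length
    have hlen : 0 < c.edges.length := by
      rw [SimpleGraph.Walk.length_edges]; omega
    obtain ⟨x, hx⟩ := List.exists_mem_of_ne_nil _ (List.ne_nil_of_length_pos hlen)
    have hxE := c.edges_subset_edgeSet hx
    have hempty : G.edgeSet = ∅ := by
      rw [← Set.ncard_eq_zero (Set.toFinite _)]
      omega
    rw [hempty] at hxE
    exact hxE
  | succ k ih =>
    intro G hc hcard
    by_cases hac : G.IsAcyclic
    · exact ⟨G, le_rfl, hc, hac⟩
    · simp only [IsAcyclic, not_forall, not_not] at hac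
      obtain ⟨v, c, hcyc⟩ := hac
      have h3 := hcyc.three_le_length
      have hlen : 0 < c.edges.length := by
        rw [SimpleGraph.Walk.length_edges]; omega
      obtain ⟨x, hx⟩ := List.exists_mem_of_ne_nil _ (List.ne_nil_of_length_pos hlen)
      have hxE : x ∈ G.edgeSet := c.edges_subset_edgeSet hx
      have hnb : ¬ G.IsBridge x := fun hb =>
        (isBridge_iff_forall_cycle_notMem hxE).mp hb c hcyc hx
      have hG' := connected_sdiff_of_not_isBridge hc hxE hnb
      have hEs : (G \ fromEdgeSet {x}).edgeSet = G.edgeSet \ {x} := by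
        rw [edgeSet_sdiff, edgeSet_fromEdgeSet, edgeSet_sdiff_sdiff_isDiag]
      have hlt : (G \ fromEdgeSet {x}).edgeSet.ncard ≤ k := by
        have := Set.ncard_diff_singleton_lt_of_mem hxE (Set.toFinite _)
        rw [hEs]
        omega
      obtain ⟨T, hT1, hT2⟩ := ih _ hG' hlt
      exact ⟨T, hT1.trans sdiff_le, hT2⟩

/-- For `n ≥ 2`, if in every cycle of the complete graph `K_n` the maximum weight is
attained by at least two edges of the cycle, then every edge of `K_n` lies in some
ω-minimum spanning tree of `K_n`. -/
theorem edge_mem_minSpanningTree_of_cycleCondition (n : ℕ) (hn : 2 ≤ n)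
    (ω : Sym2 (Fin n) → ℝ) (hcyc : CycleCondition n ω) :
    ∀ e ∈ (⊤ : SimpleGraph (Fin n)).edgeSet,
      ∃ T : SimpleGraph (Fin n), IsMinSpanningTree n ω T ∧ e ∈ T.edgeSet := by
  classical
  have hne : Nonempty (Fin n) := ⟨⟨0, by omega⟩⟩
  have htop : (⊤ : SimpleGraph (Fin n)).Connected := connected_top
  obtain ⟨T₀, -, hT₀⟩ := exists_isTree_le _ (⊤ : SimpleGraph (Fin n)) htop le_rfl
  obtain ⟨T, hTmem, hTmin⟩ := Set.exists_min_image {T : SimpleGraph (Fin n) | T.IsTree}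
    (graphWeight n ω) (Set.toFinite _) ⟨T₀, hT₀⟩
  have hTt : T.IsTree := hTmem
  intro e he
  by_cases heT : e ∈ T.edgeSet
  · exact ⟨T, ⟨hTt, fun T' h' => hTmin T' h'⟩, heT⟩
  induction e using Sym2.ind with
  | _ u v =>
    have huv : u ≠ v := ((mem_edgeSet _).1 he).ne
    -- the fundamental cycle of `s(u,v)` with respect to `T`
    obtain ⟨p₀⟩ := hTt.isConnected.preconnected v u
    set p : T.Path v u := p₀.toPath with hp_def
    set G₁ : SimpleGraph (Fin n) := T ⊔ fromEdgeSet {s(u, v)} with hG₁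
    have hTG₁ : T ≤ G₁ := le_sup_left
    have h1 : G₁.Adj u v := by
      rw [hG₁, sup_adj, fromEdgeSet_adj]
      exact Or.inr ⟨rfl, huv⟩
    set p' : G₁.Walk v u := (p : T.Walk v u).mapLe hTG₁ with hp'
    have hp'edges : p'.edges = (p : T.Walk v u).edges := walk_edges_mapLe hTG₁ _
    have hpT : ∀ g ∈ (p : T.Walk v u).edges, g ∈ T.edgeSet := fun g hg =>
      Walk.edges_subset_edgeSet _ hg
    have he_not : s(u, v) ∉ p'.edges := by
      rw [hp'edges]
      intro hmem
      exact heT (hpT _ hmem)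
    set c : G₁.Walk u u := Walk.cons h1 p' with hc_def
    have hc : c.IsCycle := Path.cons_isCycle ⟨p', (p.2.mapLe (h := hTG₁))⟩ h1 he_not
    set c' : (⊤ : SimpleGraph (Fin n)).Walk u u := c.mapLe le_top with hc'_def
    have hc' : c'.IsCycle := hc.mapLe le_top
    have hc'edges : c'.edges = c.edges := walk_edges_mapLe le_top _
    have hce : c.edges = s(u, v) :: p'.edges := by rw [hc_def, Walk.edges_cons]
    have he_c' : s(u, v) ∈ c'.edges := by rw [hc'edges, hce]; exact List.mem_cons_self
    obtain ⟨e₁, he₁, e₂, he₂, hne12, heq12, hmax⟩ := hcyc u c' hc'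
    -- choose the partner edge `f`
    obtain ⟨f, hf_c, hf_ne, hfe⟩ :
        ∃ f ∈ c.edges, f ≠ s(u, v) ∧ ω s(u, v) ≤ ω f := by
      by_cases h12 : e₁ = s(u, v)
      · refine ⟨e₂, by rwa [← hc'edges], fun h => hne12 (h12.trans h.symm), ?_⟩
        rw [← heq12]
        exact hmax _ he_c'
      · exact ⟨e₁, by rwa [← hc'edges], h12, hmax _ he_c'⟩
    have hf_p : f ∈ (p : T.Walk v u).edges := by
      rw [hce, List.mem_cons] at hf_c
      rcases hf_c with h | h
      · exact absurd h hf_ne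
      · rwa [hp'edges] at h
    have hf_T : f ∈ T.edgeSet := hpT _ hf_p
    set T' : SimpleGraph (Fin n) := G₁ \ fromEdgeSet {f} with hT'
    -- connectivity of T'
    have hG₁c : G₁.Connected := hTt.isConnected.mono hTG₁
    have hfG₁ : f ∈ G₁.edgeSet := by
      rw [hG₁, edgeSet_sup]
      exact Or.inl hf_T
    have hnb : ¬ G₁.IsBridge f := fun hb =>
      (isBridge_iff_forall_cycle_notMem hfG₁).mp hb c hc hf_c
    have hT'c : T'.Connected := connected_sdiff_of_not_isBridge hG₁c hfG₁ hnb
    -- edge set of T'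
    have hfd : ¬ f.IsDiag := T.not_isDiag_of_mem_edgeSet hf_T
    have hed : ¬ (s(u, v) : Sym2 (Fin n)).IsDiag := by simp [huv]
    have hT'E : T'.edgeSet = (T.edgeSet \ {f}) ∪ {s(u, v)} := by
      rw [hT', hG₁, edgeSet_sdiff, edgeSet_sup, edgeSet_fromEdgeSet, edgeSet_fromEdgeSet]
      ext g
      simp only [Set.mem_diff, Set.mem_union, Set.mem_singleton_iff, Set.mem_setOf_eq]
      constructor
      · rintro ⟨hg1 | ⟨hg2, hg3⟩, hg4⟩
        · left
          refine ⟨hg1, fun h => hg4 ⟨h, ?_⟩⟩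
          rw [← h] at hfd
          exact fun hd => hfd hd
        · right; exact hg2
      · rintro (⟨hg1, hg2⟩ | rfl)
        · exact ⟨Or.inl hg1, fun h => hg2 h.1⟩
        · refine ⟨Or.inr ⟨rfl, hed⟩, fun h => hf_ne (h.1.symm)⟩
    -- acyclicity of T'
    have hT'ac : T'.IsAcyclic := by
      intro x d hd
      by_cases hed' : s(u, v) ∈ d.edges
      · have h2 := (adj_and_reachable_delete_edges_iff_exists_cycle (G := T')).2 ⟨x, d, hd, hed'⟩
        obtain ⟨q, hq⟩ := reachable_delete_edges_iff_exists_walk.1 h2.2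
        have hq_sub : ∀ g ∈ q.edges, g ∈ T.edgeSet ∧ g ≠ f := by
          intro g hg
          have hgE := q.edges_subset_edgeSet hg
          rw [hT'E] at hgE
          rcases hgE with ⟨hg1, hg2⟩ | hg3
          · exact ⟨hg1, hg2⟩
          · exact absurd (Set.mem_singleton_iff.1 hg3 ▸ hg) hq
        set q' : T.Walk u v := q.transfer T (fun g hg => (hq_sub g hg).1) with hq'
        have hq'edges : q'.edges = q.edges := Walk.edges_transfer _ _
        have hpeq : q'.toPath = p.reverse := hTt.IsAcyclic.path_unique _ _
        have hfrev : f ∈ (p.reverse : T.Walk u v).edges := by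
          rw [Path.reverse, Walk.edges_reverse, List.mem_reverse]
          exact hf_p
        rw [← hpeq] at hfrev
        have := Walk.edges_toPath_subset q' hfrev
        rw [hq'edges] at this
        exact (hq_sub f this).2 rfl
      · have hdT : ∀ g ∈ d.edges, g ∈ T.edgeSet := by
          intro g hg
          have hgE := d.edges_subset_edgeSet hg
          rw [hT'E] at hgE
          rcases hgE with ⟨hg1, _⟩ | hg3
          · exact hg1
          · exact absurd (Set.mem_singleton_iff.1 hg3 ▸ hg) hed'
        exact hTt.IsAcyclic (d.transfer T hdT) (hd.transfer hdT)
    have hT't : T'.IsTree := ⟨hT'c, hT'ac⟩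
    -- weight computation
    have hfS : f ∉ T.edgeSet \ {f} := fun h => h.2 rfl
    have heS : s(u, v) ∉ T.edgeSet \ {f} := fun h => heT h.1
    have hwT' : graphWeight n ω T' = (∑ᶠ g ∈ T.edgeSet \ {f}, ω g) + ω s(u, v) := by
      rw [graphWeight, hT'E, finsum_mem_union (Set.disjoint_singleton_right.2 heS)
        (Set.toFinite _) (Set.toFinite _), finsum_mem_singleton]
    have hwT : graphWeight n ω T = (∑ᶠ g ∈ T.edgeSet \ {f}, ω g) + ω f := by
      have : T.edgeSet = (T.edgeSet \ {f}) ∪ {f} := by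
        rw [Set.diff_union_self, Set.union_eq_self_of_subset_right
          (Set.singleton_subset_iff.2 hf_T)]
      rw [graphWeight]
      conv_lhs => rw [this]
      rw [finsum_mem_union (Set.disjoint_singleton_right.2 hfS)
        (Set.toFinite _) (Set.toFinite _), finsum_mem_singleton]
    have hle : graphWeight n ω T' ≤ graphWeight n ω T := by
      rw [hwT', hwT]
      linarith
    refine ⟨T', ⟨hT't, fun T'' hT'' => hle.trans (hTmin T'' hT'')⟩, ?_⟩
    rw [hT'E]
    exact Or.inr rfl
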